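/- Let B = {b_1, …, b_d} ⊂ ℤ^d be a basis of ℝ^d, and let A ⊂ ℤ^d be finite with B ∪ {0} ⊆ A ⊆ H(B ∪ {0}). Let r ∈ P(A). If r ∈ Λ_B then r ∈ P(B ∪ {0}). If r ∉ Λ_B and a ∈ A satisfies r − a ∈ Λ_B, then r − a ∈ P(B ∪ {0}). -/

import Mathlib

open Pointwise MeasureTheory

noncomputable section

/-- Embedding of integer vectors into real vectors. -/
def emb (d : ℕ) : (Fin d → ℤ) → (Fin d → ℝ) := fun x i => (x i : ℝ)

/-- The `N`-fold sumset `NA` (with `0·A = {0}`). -/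
def nfold (d : ℕ) (A : Set (Fin d → ℤ)) (N : ℕ) : Set (Fin d → ℤ) :=
  {x | ∃ f : Fin N → (Fin d → ℤ), (∀ i, f i ∈ A) ∧ x = ∑ i, f i}

/-- `P(A) = ⋃_{N ≥ 1} NA`. -/
def PA (d : ℕ) (A : Set (Fin d → ℤ)) : Set (Fin d → ℤ) :=
  ⋃ N ∈ Set.Ici 1, nfold d A N

/-- The width `w(A) = max_{a₁,a₂ ∈ A} ‖a₁ - a₂‖_∞`. -/
def width (d : ℕ) (A : Finset (Fin d → ℤ)) : ℕ :=
  (A ×ˢ A).sup fun p => Finset.univ.sup fun i => (p.1 i - p.2 i).natAbs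

/-- The convex hull `H(A)` in `ℝ^d`. -/
def hull (d : ℕ) (A : Finset (Fin d → ℤ)) : Set (Fin d → ℝ) :=
  convexHull ℝ (emb d '' ↑A)

/-- The cone `C_B = {∑_{b ∈ B} c_b b : c_b ≥ 0}` generated by `B`. -/
def cone (d : ℕ) (B : Finset (Fin d → ℤ)) : Set (Fin d → ℝ) :=
  {x | ∃ c : (Fin d → ℤ) → ℝ, (∀ a, 0 ≤ c a) ∧ x = ∑ a ∈ B, c a • emb d a}

/-- The lattice (subgroup of `ℤ^d`) generated by a set `S`. -/
def latt (d : ℕ) (S : Set (Fin d → ℤ)) : AddSubgroup (Fin d → ℤ) :=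
  AddSubgroup.closure S

/-- The exceptional set `E(A) = (C_A ∩ Λ_A) ∖ P(A)`, viewed inside `ℤ^d`. -/
def excep (d : ℕ) (A : Finset (Fin d → ℤ)) : Set (Fin d → ℤ) :=
  {x | emb d x ∈ cone d A ∧ x ∈ latt d ↑A ∧ x ∉ PA d ↑A}

/-- The set of (lattice) extreme points of `H(A)`: those `p` with `emb p ∈ H(A)` such that
some `v ∈ span ℝ (A - A)`, `v ≠ 0`, satisfies `⟨v,x⟩ > ⟨v,p⟩` for all `x ∈ H(A) ∖ {p}`. -/
def exP (d : ℕ) (A : Finset (Fin d → ℤ)) : Set (Fin d → ℤ) :=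
  {p | emb d p ∈ hull d A ∧
    ∃ v ∈ Submodule.span ℝ (emb d '' ((A : Set (Fin d → ℤ)) - (A : Set (Fin d → ℤ)))),
      v ≠ (0 : Fin d → ℝ) ∧
      ∀ x ∈ hull d A, x ≠ emb d p → (∑ i, v i * emb d p i) < ∑ i, v i * x i}

/-- The structure equation
`NA = (N·H(A) ∩ (N·a₀ + Λ_{A-A})) ∖ ⋃_{a ∈ ex(H(A))} (N·a - E(a - A))`. -/
def structEq (d : ℕ) (A : Finset (Fin d → ℤ)) (a0 : Fin d → ℤ) (N : ℕ) : Prop :=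
  emb d '' nfold d ↑A N =
    ((N : ℝ) • hull d A ∩
      emb d '' (({N • a0} : Set (Fin d → ℤ)) +
        (latt d ((A : Set (Fin d → ℤ)) - (A : Set (Fin d → ℤ))) : Set (Fin d → ℤ)))) \
    ⋃ a ∈ exP d A,
      emb d '' (({N • a} : Set (Fin d → ℤ)) - excep d (A.image fun y => a - y))

/-- `H(A)` is a `d`-simplex: there is `B ⊆ A` with `|B| = d+1`, `B - B` spanning `ℝ^d`,
and `H(A) = H(B)`. -/
def IsSimplex (d : ℕ) (A : Finset (Fin d → ℤ)) : Prop :=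
  ∃ B ⊆ A, B.card = d + 1 ∧
    Submodule.span ℝ (emb d '' ((B : Set (Fin d → ℤ)) - (B : Set (Fin d → ℤ)))) = ⊤ ∧
    hull d B = hull d A

/-- `N_A(v)`: the minimal positive `N` with `v ∈ NA`, and `N_A(0) = 0`. -/
def NAfn (d : ℕ) (A : Set (Fin d → ℤ)) (v : Fin d → ℤ) : ℕ :=
  if v = 0 then 0 else sInf {N : ℕ | 0 < N ∧ v ∈ nfold d A N}

/-- The set `S(A,B)` of `B`-minimal elements. -/
def Smin (d : ℕ) (A B : Set (Fin d → ℤ)) : Set (Fin d → ℤ) :=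
  {0} ∪ {u | u ∈ PA d A ∧ u ≠ 0 ∧
    ∀ f : Fin (NAfn d A u) → (Fin d → ℤ), (∀ i, f i ∈ A) → u = ∑ i, f i →
      ∀ i, f i ∉ B ∪ ({0} : Set (Fin d → ℤ))}

namespace SBD

variable {d : ℕ}

lemma emb_add (x y : Fin d → ℤ) : emb d (x + y) = emb d x + emb d y := by
  funext i; simp [emb]

lemma emb_zero : emb d 0 = 0 := by funext i; simp [emb]

lemma emb_sum {n : ℕ} (f : Fin n → (Fin d → ℤ)) :
    emb d (∑ i, f i) = ∑ i, emb d (f i) := by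
  funext j; simp [emb, Finset.sum_apply]

lemma emb_zsmul (m : ℤ) (x : Fin d → ℤ) : emb d (m • x) = (m : ℝ) • emb d x := by
  funext i; simp [emb]

lemma emb_injective : Function.Injective (emb d) := by
  intro x y h
  funext i
  have := congrFun h i
  simpa [emb] using this

lemma mem_PA_of_mem {S : Set (Fin d → ℤ)} {s : Fin d → ℤ} (hs : s ∈ S) : s ∈ PA d S := by
  refine Set.mem_biUnion (Set.mem_Ici.2 le_rfl) ?_
  exact ⟨fun _ => s, fun _ => hs, by simp⟩

lemma PA_add {S : Set (Fin d → ℤ)} {x y : Fin d → ℤ}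
    (hx : x ∈ PA d S) (hy : y ∈ PA d S) : x + y ∈ PA d S := by
  obtain ⟨N, hN, f, hf, hfx⟩ : ∃ N, 1 ≤ N ∧ ∃ f : Fin N → (Fin d → ℤ),
      (∀ i, f i ∈ S) ∧ x = ∑ i, f i := by
    simpa [PA, nfold] using hx
  obtain ⟨M, hM, g, hg, hgy⟩ : ∃ M, 1 ≤ M ∧ ∃ g : Fin M → (Fin d → ℤ),
      (∀ i, g i ∈ S) ∧ y = ∑ i, g i := by
    simpa [PA, nfold] using hy
  refine Set.mem_biUnion (Set.mem_Ici.2 (by omega : 1 ≤ N + M)) ?_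
  refine ⟨Fin.append f g, ?_, ?_⟩
  · intro i
    refine Fin.addCases (fun j => ?_) (fun j => ?_) i
    · rw [Fin.append_left]; exact hf j
    · rw [Fin.append_right]; exact hg j
  · rw [Fin.sum_univ_add]
    simp [hfx, hgy]

end SBD

namespace SBD

variable {d : ℕ}

lemma sum_smul_mem_PA {S : Set (Fin d → ℤ)} (h0 : (0 : Fin d → ℤ) ∈ S)
    {b : Fin d → (Fin d → ℤ)} (hbS : ∀ i, b i ∈ S)
    (m : Fin d → ℤ) (hm : ∀ i, 0 ≤ m i) : (∑ i, m i • b i) ∈ PA d S := by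
  classical
  have key : ∀ t : Finset (Fin d), (∑ i ∈ t, m i • b i) ∈ PA d S := by
    intro t
    induction t using Finset.induction with
    | empty => simpa using mem_PA_of_mem h0
    | @insert j t hj ih =>
      rw [Finset.sum_insert hj]
      refine PA_add ?_ ih
      have hmj : ((m j).toNat : ℤ) = m j := Int.toNat_of_nonneg (hm j)
      rw [← hmj, natCast_zsmul]
      -- (m j).toNat • b j ∈ PA
      induction (m j).toNat with
      | zero => simpa using mem_PA_of_mem h0
      | succ n ihn => rw [succ_nsmul]; exact PA_add ihn (mem_PA_of_mem (hbS j))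
  exact key Finset.univ

lemma exists_coords_of_mem_latt {b : Fin d → (Fin d → ℤ)} {r : Fin d → ℤ}
    (hr : r ∈ latt d (Set.range b)) : ∃ m : Fin d → ℤ, r = ∑ i, m i • b i := by
  have h : r ∈ Submodule.span ℤ (Set.range b) := by
    have := Submodule.span_int_eq_addSubgroupClosure (M := Fin d → ℤ) (Set.range b)
    rw [latt, ← this] at hr
    exact hr
  obtain ⟨c, hc⟩ := (Submodule.mem_span_range_iff_exists_fun ℤ).1 h
  exact ⟨c, hc.symm⟩

end SBD

namespace SBD

variable {d : ℕ}

lemma emb_sub (x y : Fin d → ℤ) : emb d (x - y) = emb d x - emb d y := by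
  funext i; simp [emb]

theorem main_aux (d : ℕ) (b : Fin d → (Fin d → ℤ))
    (hb : LinearIndependent ℝ (fun i => emb d (b i)))
    (A : Finset (Fin d → ℤ))
    (hBA : Set.range b ∪ {0} ⊆ (A : Set (Fin d → ℤ)))
    (hAH : emb d '' (A : Set (Fin d → ℤ)) ⊆ convexHull ℝ (emb d '' (Set.range b ∪ {0})))
    (r : Fin d → ℤ) (hr : r ∈ PA d ↑A) :
    ((r : Fin d → ℤ) ∈ latt d (Set.range b) → r ∈ PA d (Set.range b ∪ {0})) ∧
    (∀ a ∈ A, r ∉ latt d (Set.range b) → r - a ∈ latt d (Set.range b) →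
      r - a ∈ PA d (Set.range b ∪ {0})) := by
  classical
  have h0mem : (0 : Fin d → ℤ) ∈ Set.range b ∪ ({0} : Set (Fin d → ℤ)) := Or.inr rfl
  have hbmem : ∀ i, b i ∈ Set.range b ∪ ({0} : Set (Fin d → ℤ)) := fun i => Or.inl ⟨i, rfl⟩
  rcases Nat.eq_zero_or_pos d with hd | hd
  · subst hd
    have hz : ∀ x : Fin 0 → ℤ, x = 0 := fun x => funext fun i => i.elim0
    constructor
    · intro _; rw [hz r]; exact mem_PA_of_mem h0mem
    · intro a _ _ _; rw [hz (r - a)]; exact mem_PA_of_mem h0mem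
  haveI : Nonempty (Fin d) := ⟨⟨0, hd⟩⟩
  set B : Module.Basis (Fin d) ℝ (Fin d → ℝ) :=
    basisOfLinearIndependentOfCardEqFinrank hb (by simp) with hB
  have hBapp : ∀ i, B i = emb d (b i) := fun i => by
    rw [hB, coe_basisOfLinearIndependentOfCardEqFinrank]
  -- the coordinate region Q
  set Q : Set (Fin d → ℝ) :=
    {x | (∀ i, 0 ≤ B.repr x i) ∧ ∑ i, B.repr x i ≤ 1} with hQdef
  have hQconv : Convex ℝ Q := by
    intro x hx y hy s t hs ht hst
    have hrep : ∀ i, B.repr (s • x + t • y) i = s * B.repr x i + t * B.repr y i := by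
      intro i; simp [map_add, _root_.map_smul]
    constructor
    · intro i
      rw [hrep]
      exact add_nonneg (mul_nonneg hs (hx.1 i)) (mul_nonneg ht (hy.1 i))
    · calc ∑ i, B.repr (s • x + t • y) i
          = s * ∑ i, B.repr x i + t * ∑ i, B.repr y i := by
            simp_rw [hrep]; rw [Finset.sum_add_distrib, Finset.mul_sum, Finset.mul_sum]
      _ ≤ s * 1 + t * 1 := by
            gcongr
            exacts [hx.2, hy.2]
      _ = 1 := by rw [mul_one, mul_one, hst]
  have hgen : emb d '' (Set.range b ∪ {0}) ⊆ Q := by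
    rintro _ ⟨x, hx, rfl⟩
    rcases hx with ⟨i, rfl⟩ | hx
    · rw [← hBapp]
      constructor
      · intro j
        rw [B.repr_self]
        simp [Finsupp.single_apply]
        split <;> norm_num
      · rw [B.repr_self]
        simp [Finsupp.single_apply]
    · simp only [Set.mem_singleton_iff] at hx
      subst hx
      rw [emb_zero]
      constructor <;> simp
  have hQ : ∀ x ∈ convexHull ℝ (emb d '' (Set.range b ∪ {0})), x ∈ Q :=
    fun x hx => convexHull_min hgen hQconv hx
  have hAQ : ∀ a ∈ A, emb d a ∈ Q := fun a ha => hQ _ (hAH ⟨a, ha, rfl⟩)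
  -- coordinates of r are nonnegative
  obtain ⟨N, hN, f, hf, hsum⟩ : ∃ N, 1 ≤ N ∧ ∃ f : Fin N → (Fin d → ℤ),
      (∀ i, f i ∈ (A : Set (Fin d → ℤ))) ∧ r = ∑ i, f i := by
    simpa [PA, nfold] using hr
  have hrQ : ∀ i, 0 ≤ B.repr (emb d r) i := by
    intro i
    have : emb d r = ∑ j, emb d (f j) := by rw [hsum, emb_sum]
    rw [this, map_sum]
    rw [Finsupp.finset_sum_apply]
    exact Finset.sum_nonneg fun j _ => (hAQ (f j) (hf j)).1 i
  -- coordinates of a sum ∑ mᵢ • bᵢ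
  have hcoord : ∀ m : Fin d → ℤ, ∀ i, B.repr (emb d (∑ k, m k • b k)) i = (m i : ℝ) := by
    intro m i
    have h1 : emb d (∑ k, m k • b k) = ∑ k, (m k : ℝ) • B k := by
      rw [emb_sum]
      exact Finset.sum_congr rfl fun k _ => by rw [emb_zsmul, hBapp]
    rw [h1]
    exact congrFun (B.repr_sum_self fun k => (m k : ℝ)) i
  constructor
  · intro hlat
    obtain ⟨m, hm⟩ := exists_coords_of_mem_latt hlat
    have hnn : ∀ i, 0 ≤ m i := by
      intro i
      have := hrQ i
      rw [hm, hcoord m i] at this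
      exact_mod_cast this
    rw [hm]
    exact sum_smul_mem_PA h0mem hbmem m hnn
  · intro a ha hnl hl
    obtain ⟨m, hm⟩ := exists_coords_of_mem_latt hl
    have hco : ∀ i, (m i : ℝ) = B.repr (emb d r) i - B.repr (emb d a) i := by
      intro i
      rw [← hcoord m i, ← hm, emb_sub, map_sub]
      simp
    have haQ := hAQ a ha
    have hnn : ∀ i, 0 ≤ m i := by
      intro i
      by_contra hneg
      push_neg at hneg
      have hle : (m i : ℝ) ≤ -1 := by
        have h' : m i ≤ -1 := by omega
        have : ((m i : ℤ) : ℝ) ≤ ((-1 : ℤ) : ℝ) := by exact_mod_cast h'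
        simpa using this
      have hai : 1 ≤ B.repr (emb d a) i := by
        have := hco i
        have hri := hrQ i
        linarith
      have hai1 : B.repr (emb d a) i = 1 := by
        have hsle : B.repr (emb d a) i ≤ ∑ k, B.repr (emb d a) k :=
          Finset.single_le_sum (fun k _ => haQ.1 k) (Finset.mem_univ i)
        linarith [haQ.2]
      have hrest : ∀ k, k ≠ i → B.repr (emb d a) k = 0 := by
        intro k hk
        have hsplit : ∑ j, B.repr (emb d a) j
            = B.repr (emb d a) i + ∑ j ∈ Finset.univ.erase i, B.repr (emb d a) j := by
          rw [Finset.add_sum_erase _ _ (Finset.mem_univ i)]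
        have hz : ∑ j ∈ Finset.univ.erase i, B.repr (emb d a) j ≤ 0 := by
          have := haQ.2
          rw [hsplit, hai1] at this
          linarith
        have := (Finset.sum_eq_zero_iff_of_nonneg
          (fun j _ => haQ.1 j)).1 (le_antisymm hz
            (Finset.sum_nonneg fun j _ => haQ.1 j)) k (by simp [hk])
        exact this
      -- then emb a = B i = emb (b i)
      have hae : emb d a = emb d (b i) := by
        have h1 : emb d a = ∑ k, B.repr (emb d a) k • B k := (B.sum_repr (emb d a)).symm
        rw [h1, Finset.sum_eq_single i (fun k _ hk => by rw [hrest k hk, zero_smul])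
          (fun h => absurd (Finset.mem_univ i) h), hai1, one_smul, hBapp]
      have hab : a = b i := emb_injective hae
      apply hnl
      have : r = (r - a) + a := by ring
      rw [this]
      exact AddSubgroup.add_mem _ hl
        (by rw [hab]; exact AddSubgroup.subset_closure ⟨i, rfl⟩)
    rw [hm]
    exact sum_smul_mem_PA h0mem hbmem m hnn

end SBD


/-- If `r ∈ P(A)` is congruent to `a ∈ A ∪ {0}` modulo `Λ_B` then `r - a ∈ P(B ∪ {0})`. -/
theorem simplex_basic_davenport (d : ℕ) (b : Fin d → (Fin d → ℤ))
    (hb : LinearIndependent ℝ (fun i => emb d (b i)))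
    (A : Finset (Fin d → ℤ))
    (hBA : Set.range b ∪ {0} ⊆ (A : Set (Fin d → ℤ)))
    (hAH : emb d '' (A : Set (Fin d → ℤ)) ⊆ convexHull ℝ (emb d '' (Set.range b ∪ {0})))
    (r : Fin d → ℤ) (hr : r ∈ PA d ↑A) :
    ((r : Fin d → ℤ) ∈ latt d (Set.range b) → r ∈ PA d (Set.range b ∪ {0})) ∧
    (∀ a ∈ A, r ∉ latt d (Set.range b) → r - a ∈ latt d (Set.range b) →
      r - a ∈ PA d (Set.range b ∪ {0})) :=
  SBD.main_aux d b hb A hBA hAH r hr
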